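/- Let G be a σ-stable subset of L⁰(𝓕) (real-valued measurable functions modulo a.s. equality) and ε ∈ L⁰₊₊(𝓕). If G is bounded above in L⁰(𝓕), then there exists g_ε ∈ G with sup G < g_ε + ε a.s. on Ω. Dually, if G is bounded below, there exists g_ε ∈ G with inf G > g_ε − ε a.s. on Ω. -/

import Mathlib

open MeasureTheory Filter Set

variable {Ω : Type*} [MeasurableSpace Ω]

/-- A countable measurable partition of `Ω`. -/
def IsMeasPartition (A : ℕ → Set Ω) : Prop :=
  (∀ n, MeasurableSet (A n)) ∧ Pairwise (Function.onFun Disjoint A) ∧ (⋃ n, A n) = Set.univ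

/-- `b` is an a.e. upper bound of the family `S ⊆ L⁰(𝓕)`. -/
def IsAEUB {Ω : Type*} [MeasurableSpace Ω] (μ : MeasureTheory.Measure Ω)
    (S : Set (Ω → ℝ)) (b : Ω → ℝ) : Prop :=
  ∀ f ∈ S, ∀ᵐ ω ∂μ, f ω ≤ b ω

/-- `b` is the supremum `⋁S` of the family `S` in the a.e. order of `L⁰(𝓕)`. -/
def IsAELUB {Ω : Type*} [MeasurableSpace Ω] (μ : MeasureTheory.Measure Ω)
    (S : Set (Ω → ℝ)) (b : Ω → ℝ) : Prop :=
  IsAEUB μ S b ∧ ∀ c : Ω → ℝ, IsAEUB μ S c → ∀ᵐ ω ∂μ, b ω ≤ c ω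

/-- `b` is an a.e. lower bound of the family `S ⊆ L⁰(𝓕)`. -/
def IsAELB {Ω : Type*} [MeasurableSpace Ω] (μ : MeasureTheory.Measure Ω)
    (S : Set (Ω → ℝ)) (b : Ω → ℝ) : Prop :=
  ∀ f ∈ S, ∀ᵐ ω ∂μ, b ω ≤ f ω

/-- `b` is the infimum `⋀S` of the family `S` in the a.e. order of `L⁰(𝓕)`. -/
def IsAEGLB {Ω : Type*} [MeasurableSpace Ω] (μ : MeasureTheory.Measure Ω)
    (S : Set (Ω → ℝ)) (b : Ω → ℝ) : Prop :=
  IsAELB μ S b ∧ ∀ c : Ω → ℝ, IsAELB μ S c → ∀ᵐ ω ∂μ, c ω ≤ b ω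

private lemma measurable_tan' : Measurable Real.tan := by
  have : Real.tan = fun x => Real.sin x / Real.cos x := funext fun x => Real.tan_eq_sin_div_cos x
  rw [this]
  exact Real.measurable_sin.div Real.measurable_cos

/-- The supremum half of the statement, as an auxiliary lemma. -/
private lemma sup_part_aux (μ : Measure Ω) [IsProbabilityMeasure μ]
    (G : Set (Ω → ℝ)) (hne : G.Nonempty) (hmeas : ∀ g ∈ G, Measurable g)
    (hG : ∀ A : ℕ → Set Ω, IsMeasPartition A → ∀ gs : ℕ → (Ω → ℝ), (∀ n, gs n ∈ G) →
      ∃ g ∈ G, ∀ n, ∀ᵐ ω ∂μ, ω ∈ A n → g ω = gs n ω)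
    (ε : Ω → ℝ) (hεm : Measurable ε) (hε : ∀ᵐ ω ∂μ, 0 < ε ω)
    (S : Ω → ℝ) (hS : IsAELUB μ G S) : ∃ g ∈ G, ∀ᵐ ω ∂μ, S ω < g ω + ε ω := by
  classical
  -- directedness
  have dir : ∀ a ∈ G, ∀ b ∈ G, ∃ k ∈ G,
      (∀ᵐ ω ∂μ, a ω ≤ k ω) ∧ (∀ᵐ ω ∂μ, b ω ≤ k ω) := by
    intro a ha b hb
    set A : ℕ → Set Ω := fun n =>
      if n = 0 then {ω | b ω ≤ a ω} else if n = 1 then {ω | b ω ≤ a ω}ᶜ else ∅ with hA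
    have hpart : IsMeasPartition A := by
      refine ⟨fun n => ?_, ?_, ?_⟩
      · rcases n with _ | _ | n <;>
          simp [A, measurableSet_le (hmeas b hb) (hmeas a ha),
            (measurableSet_le (hmeas b hb) (hmeas a ha)).compl]
      · intro i j hij
        simp only [Function.onFun, Set.disjoint_left]
        intro ω hi hj
        rcases i with _ | _ | i <;> rcases j with _ | _ | j <;> simp_all [A] <;> linarith
      · ext ω
        simp only [Set.mem_iUnion, Set.mem_univ, iff_true]
        by_cases h : b ω ≤ a ω
        · exact ⟨0, by simp [A, h]⟩
        · exact ⟨1, by simp [A, h]⟩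
    obtain ⟨k, hkG, hk⟩ := hG A hpart (fun n => if n = 0 then a else b)
      (fun n => by by_cases h : n = 0 <;> simp [h, ha, hb])
    refine ⟨k, hkG, ?_, ?_⟩
    · filter_upwards [hk 0, hk 1] with ω h0 h1
      by_cases hω : b ω ≤ a ω
      · have h := h0 (by simp [A, hω]); simp at h; exact h.ge
      · have h := h1 (by simp [A, hω]); simp at h; push_neg at hω; linarith
    · filter_upwards [hk 0, hk 1] with ω h0 h1
      by_cases hω : b ω ≤ a ω
      · have h := h0 (by simp [A, hω]); simp at h; linarith
      · have h := h1 (by simp [A, hω]); simp at h; exact h.ge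
  -- the integral functional
  set F : (Ω → ℝ) → ℝ := fun g => ∫ ω, Real.arctan (g ω) ∂μ with hF
  have hintb : ∀ f : Ω → ℝ, Measurable f → (∀ ω, |f ω| ≤ Real.pi) → Integrable f μ := by
    intro f hf hb
    refine (integrable_const Real.pi).mono' hf.aestronglyMeasurable ?_
    filter_upwards with ω
    simpa [Real.norm_eq_abs] using hb ω
  have harcbd : ∀ x : ℝ, |Real.arctan x| ≤ Real.pi := by
    intro x
    have h1 := Real.arctan_lt_pi_div_two x
    have h2 := Real.neg_pi_div_two_lt_arctan x
    have := Real.pi_pos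
    rw [abs_le]; constructor <;> linarith
  have hint : ∀ g : Ω → ℝ, Measurable g → Integrable (fun ω => Real.arctan (g ω)) μ :=
    fun g hg => hintb _ (Real.measurable_arctan.comp hg) (fun ω => harcbd _)
  have hFmono : ∀ a b : Ω → ℝ, Measurable a → Measurable b →
      (∀ᵐ ω ∂μ, a ω ≤ b ω) → F a ≤ F b := by
    intro a b ha hb hab
    refine integral_mono_ae (hint a ha) (hint b hb) ?_
    filter_upwards [hab] with ω h using Real.arctan_strictMono.monotone h
  have hFbd : ∀ g ∈ G, F g ≤ Real.pi := by
    intro g hg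
    calc F g ≤ ∫ _, Real.pi ∂μ := by
          refine integral_mono_ae (hint g (hmeas g hg)) (integrable_const _) ?_
          filter_upwards with ω using (le_of_abs_le (harcbd (g ω)))
      _ = Real.pi := by simp
  set T : ℝ := sSup (F '' G) with hT
  have hTne : (F '' G).Nonempty := hne.image F
  have hTbd : BddAbove (F '' G) := by
    refine ⟨Real.pi, ?_⟩
    rintro x ⟨g, hg, rfl⟩
    exact hFbd g hg
  have hseq : ∀ n : ℕ, ∃ g ∈ G, T - 1 / (n + 1) < F g := by
    intro n
    have hlt : T - 1 / (n + 1 : ℝ) < T := by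
      have : (0:ℝ) < 1 / (n + 1) := by positivity
      linarith
    obtain ⟨x, ⟨g, hg, rfl⟩, hx⟩ := exists_lt_of_lt_csSup hTne hlt
    exact ⟨g, hg, hx⟩
  choose g0 hg0G hg0 using hseq
  -- totalized directedness choice function
  have dir' : ∀ a b : Ω → ℝ, ∃ k : Ω → ℝ, a ∈ G → b ∈ G →
      k ∈ G ∧ (∀ᵐ ω ∂μ, a ω ≤ k ω) ∧ (∀ᵐ ω ∂μ, b ω ≤ k ω) := by
    intro a b
    by_cases ha : a ∈ G
    · by_cases hb : b ∈ G
      · obtain ⟨k, h1, h2, h3⟩ := dir a ha b hb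
        exact ⟨k, fun _ _ => ⟨h1, h2, h3⟩⟩
      · exact ⟨a, fun _ h => absurd h hb⟩
    · exact ⟨a, fun h => absurd h ha⟩
  choose K hK using dir'
  -- a recursively built "increasing" sequence
  set h : ℕ → Ω → ℝ := fun n => Nat.rec (g0 0) (fun m ih => K ih (g0 (m + 1))) n with hh
  have hzero : h 0 = g0 0 := rfl
  have hsucc : ∀ n, h (n + 1) = K (h n) (g0 (n + 1)) := fun n => rfl
  have hmem : ∀ n, h n ∈ G := by
    intro n
    induction n with
    | zero => exact hg0G 0
    | succ m ih =>
        rw [hsucc]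
        exact (hK (h m) (g0 (m + 1)) ih (hg0G (m + 1))).1
  have hFlow : ∀ n, T - 1 / (n + 1) < F (h n) := by
    intro n
    induction n with
    | zero => rw [hzero]; simpa using hg0 0
    | succ m ih =>
        have hk := hK (h m) (g0 (m + 1)) (hmem m) (hg0G (m + 1))
        have : F (g0 (m + 1)) ≤ F (h (m + 1)) := by
          rw [hsucc]
          exact hFmono _ _ (hmeas _ (hg0G (m + 1))) (hmeas _ (hmem (m + 1)))
            hk.2.2
        have := hg0 (m + 1)
        push_cast at *
        linarith
  -- the measurable envelope u of arctan ∘ h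
  set u : Ω → ℝ := fun ω => ⨆ n, Real.arctan (h n ω) with hu
  have hbddA : ∀ ω, BddAbove (Set.range fun n => Real.arctan (h n ω)) := by
    intro ω
    refine ⟨Real.pi / 2, ?_⟩
    rintro x ⟨n, rfl⟩
    exact (Real.arctan_lt_pi_div_two _).le
  have humeas : Measurable u :=
    Measurable.iSup fun n => Real.measurable_arctan.comp (hmeas _ (hmem n))
  have hule : ∀ ω n, Real.arctan (h n ω) ≤ u ω := fun ω n => le_ciSup (hbddA ω) n
  have hugt : ∀ ω, -(Real.pi / 2) < u ω :=
    fun ω => lt_of_lt_of_le (Real.neg_pi_div_two_lt_arctan _) (hule ω 0)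
  have hubd : ∀ ω, |u ω| ≤ Real.pi := by
    intro ω
    have h1 : u ω ≤ Real.pi / 2 := ciSup_le fun n => (Real.arctan_lt_pi_div_two _).le
    have := Real.pi_pos
    rw [abs_le]; constructor <;> [linarith [hugt ω]; linarith]
  -- key domination: every g ∈ G has arctan g ≤ u a.e.
  have hdom : ∀ g ∈ G, ∀ᵐ ω ∂μ, Real.arctan (g ω) ≤ u ω := by
    intro g hg
    set φ : Ω → ℝ := fun ω => max (Real.arctan (g ω) - u ω) 0 with hφ
    have hφmeas : Measurable φ :=
      ((Real.measurable_arctan.comp (hmeas g hg)).sub humeas).max measurable_const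
    have hφbd : ∀ ω, |φ ω| ≤ Real.pi := by
      intro ω
      have h1 := harcbd (g ω)
      have h2 := hubd ω
      have := Real.pi_pos
      rw [abs_le] at *
      constructor
      · have : (0:ℝ) ≤ φ ω := le_max_right _ _
        linarith
      · refine max_le ?_ (by linarith)
        linarith [hugt ω, Real.arctan_lt_pi_div_two (g ω)]
    have hφint : Integrable φ μ := hintb φ hφmeas hφbd
    have hφnonneg : ∀ ω, 0 ≤ φ ω := fun ω => le_max_right _ _
    have hφn : ∀ n : ℕ, ∫ ω, φ ω ∂μ < 1 / (n + 1) := by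
      intro n
      obtain ⟨k, hkG, hk1, hk2⟩ := dir g hg (h n) (hmem n)
      have hmaxmeas : Measurable fun ω => max (Real.arctan (g ω)) (Real.arctan (h n ω)) :=
        (Real.measurable_arctan.comp (hmeas g hg)).max
          (Real.measurable_arctan.comp (hmeas _ (hmem n)))
      have hmaxbd : ∀ ω, |max (Real.arctan (g ω)) (Real.arctan (h n ω))| ≤ Real.pi := by
        intro ω
        have h1 := harcbd (g ω); have h2 := harcbd (h n ω)
        rw [abs_le] at *
        exact ⟨le_max_of_le_left h1.1, max_le h1.2 h2.2⟩
      have hmaxint : Integrable (fun ω => max (Real.arctan (g ω)) (Real.arctan (h n ω))) μ :=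
        hintb _ hmaxmeas hmaxbd
      have hstep1 : ∫ ω, max (Real.arctan (g ω)) (Real.arctan (h n ω)) ∂μ ≤ F k := by
        refine integral_mono_ae hmaxint (hint k (hmeas k hkG)) ?_
        filter_upwards [hk1, hk2] with ω h1 h2
        exact max_le (Real.arctan_strictMono.monotone h1) (Real.arctan_strictMono.monotone h2)
      have hstep2 : F k ≤ T := le_csSup hTbd ⟨k, hkG, rfl⟩
      have hstep3 : ∀ ω, φ ω ≤ max (Real.arctan (g ω)) (Real.arctan (h n ω)) - Real.arctan (h n ω) := by
        intro ω
        refine max_le ?_ ?_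
        · exact sub_le_sub (le_max_left _ _) (hule ω n)
        · exact sub_nonneg.2 (le_max_right _ _)
      have hstep4 : ∫ ω, φ ω ∂μ ≤
          ∫ ω, (max (Real.arctan (g ω)) (Real.arctan (h n ω)) - Real.arctan (h n ω)) ∂μ := by
        refine integral_mono_ae hφint (hmaxint.sub (hint _ (hmeas _ (hmem n)))) ?_
        filter_upwards with ω using hstep3 ω
      rw [integral_sub hmaxint (hint _ (hmeas _ (hmem n)))] at hstep4
      have := hFlow n
      rw [hF] at *
      linarith
    have hφle0 : ∫ ω, φ ω ∂μ ≤ 0 := by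
      by_contra hc
      push_neg at hc
      obtain ⟨n, hn⟩ := exists_nat_one_div_lt hc
      exact absurd (hφn n) (not_lt.2 hn.le)
    have hφ0 : ∫ ω, φ ω ∂μ = 0 :=
      le_antisymm hφle0 (integral_nonneg hφnonneg)
    have := (integral_eq_zero_iff_of_nonneg hφnonneg hφint).1 hφ0
    filter_upwards [this] with ω hω
    have : φ ω = 0 := hω
    have h1 : Real.arctan (g ω) - u ω ≤ φ ω := le_max_left _ _
    rw [this] at h1
    linarith
  -- a.e. comparison with S
  have hbound : ∀ᵐ ω ∂μ, ∀ n, h n ω ≤ S ω := ae_all_iff.2 fun n => hS.1 _ (hmem n)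
  have hult : ∀ᵐ ω ∂μ, u ω < Real.pi / 2 := by
    filter_upwards [hbound] with ω hω
    have : u ω ≤ Real.arctan (S ω) :=
      ciSup_le fun n => Real.arctan_strictMono.monotone (hω n)
    exact lt_of_le_of_lt this (Real.arctan_lt_pi_div_two _)
  -- measurable version v of S
  set v : Ω → ℝ := fun ω => if u ω < Real.pi / 2 then Real.tan (u ω) else 0 with hv
  have hvmeas : Measurable v :=
    Measurable.ite (measurableSet_lt humeas measurable_const)
      (measurable_tan'.comp humeas) measurable_const
  have hveq : ∀ ω, u ω < Real.pi / 2 → Real.arctan (v ω) = u ω := by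
    intro ω hω
    rw [hv]
    simp only [if_pos hω]
    exact Real.arctan_tan (hugt ω) hω
  have hub : IsAEUB μ G v := by
    intro g hg
    filter_upwards [hdom g hg, hult] with ω h1 h2
    have := hveq ω h2
    have h3 : Real.arctan (g ω) ≤ Real.arctan (v ω) := by rw [this]; exact h1
    exact Real.arctan_strictMono.le_iff_le.1 h3
  have hSv : ∀ᵐ ω ∂μ, S ω ≤ v ω := hS.2 v hub
  -- a.e. some h n gets within ε of v
  have hex : ∀ᵐ ω ∂μ, ∃ n, v ω < h n ω + ε ω := by
    filter_upwards [hε, hult] with ω hεω huω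
    by_contra hc
    push_neg at hc
    have h1 : ∀ n, Real.arctan (h n ω) ≤ Real.arctan (v ω - ε ω) :=
      fun n => Real.arctan_strictMono.monotone (by linarith [hc n])
    have h2 : u ω ≤ Real.arctan (v ω - ε ω) := ciSup_le h1
    have h3 : Real.arctan (v ω) ≤ Real.arctan (v ω - ε ω) := by
      rw [hveq ω huω]; exact h2
    have h4 : v ω ≤ v ω - ε ω := Real.arctan_strictMono.le_iff_le.1 h3
    linarith
  -- the partition
  set Pset : ℕ → Set Ω := fun n => {ω | v ω < h n ω + ε ω} with hPset
  have hPmeas : ∀ n, MeasurableSet (Pset n) :=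
    fun n => measurableSet_lt hvmeas ((hmeas _ (hmem n)).add hεm)
  set A : ℕ → Set Ω := fun n =>
    if n = 0 then disjointed Pset 0 ∪ (⋃ m, Pset m)ᶜ else disjointed Pset n with hA
  have hdsub : ∀ n, disjointed Pset n ⊆ A n := by
    intro n
    by_cases hn : n = 0
    · subst hn; rw [hA]; simp only [if_pos rfl]; exact Set.subset_union_left
    · rw [hA]; simp only [if_neg hn]; exact fun x hx => hx
  have hpart : IsMeasPartition A := by
    refine ⟨fun n => ?_, ?_, ?_⟩
    · by_cases hn : n = 0
      · subst hn
        simp only [hA, if_pos rfl]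
        exact (MeasurableSet.disjointed hPmeas 0).union (MeasurableSet.iUnion hPmeas).compl
      · simp only [hA, if_neg hn]
        exact MeasurableSet.disjointed hPmeas n
    · have hd := disjoint_disjointed Pset
      have hcompl : ∀ m, Disjoint ((⋃ k, Pset k)ᶜ) (disjointed Pset m) := by
        intro m
        rw [Set.disjoint_left]
        intro x hx hx2
        exact hx (Set.subset_iUnion Pset m (disjointed_subset Pset m hx2))
      intro i j hij
      simp only [Function.onFun]
      by_cases hi : i = 0
      · subst hi
        have hj : j ≠ 0 := fun hj => hij hj.symm
        simp only [hA, if_pos rfl, if_neg hj]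
        exact Set.disjoint_union_left.2 ⟨hd hij, hcompl j⟩
      · by_cases hj : j = 0
        · subst hj
          simp only [hA, if_pos rfl, if_neg hi]
          exact (Set.disjoint_union_left.2 ⟨hd hij.symm, hcompl i⟩).symm
        · simp only [hA, if_neg hi, if_neg hj]
          exact hd hij
    · ext ω
      simp only [Set.mem_iUnion, Set.mem_univ, iff_true]
      by_cases hω : ω ∈ ⋃ m, Pset m
      · rw [← iUnion_disjointed] at hω
        obtain ⟨n, hn⟩ := Set.mem_iUnion.1 hω
        exact ⟨n, hdsub n hn⟩
      · exact ⟨0, by rw [hA]; simp only [if_pos rfl]; exact Set.mem_union_right _ hω⟩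
  obtain ⟨g, hgG, hgae⟩ := hG A hpart h hmem
  refine ⟨g, hgG, ?_⟩
  filter_upwards [hex, hSv, ae_all_iff.2 hgae] with ω h1 h2 h3
  obtain ⟨n, hn⟩ := h1
  have hωU : ω ∈ ⋃ m, Pset m := Set.mem_iUnion.2 ⟨n, hn⟩
  rw [← iUnion_disjointed] at hωU
  obtain ⟨m, hm⟩ := Set.mem_iUnion.1 hωU
  have hgm : g ω = h m ω := h3 m (hdsub m hm)
  have hP : ω ∈ Pset m := disjointed_subset Pset m hm
  have : v ω < h m ω + ε ω := hP
  rw [← hgm] at this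
  linarith

/-- if `G ⊆ L⁰(𝓕)` is σ-stable and bounded above then the supremum `⋁G`
is `ε`-approximated from below by an element of `G`, a.s. on the whole of `Ω`; dually for
the infimum when `G` is bounded below. -/
theorem sigmaStable_sup_approx (μ : Measure Ω) [IsProbabilityMeasure μ]
    (G : Set (Ω → ℝ)) (hne : G.Nonempty) (hmeas : ∀ g ∈ G, Measurable g)
    (hG : ∀ A : ℕ → Set Ω, IsMeasPartition A → ∀ gs : ℕ → (Ω → ℝ), (∀ n, gs n ∈ G) →
      ∃ g ∈ G, ∀ n, ∀ᵐ ω ∂μ, ω ∈ A n → g ω = gs n ω)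
    (ε : Ω → ℝ) (hεm : Measurable ε) (hε : ∀ᵐ ω ∂μ, 0 < ε ω) :
    (∀ S : Ω → ℝ, IsAELUB μ G S → ∃ g ∈ G, ∀ᵐ ω ∂μ, S ω < g ω + ε ω) ∧
    (∀ I : Ω → ℝ, IsAEGLB μ G I → ∃ g ∈ G, ∀ᵐ ω ∂μ, g ω - ε ω < I ω) := by
  constructor
  · exact fun S hS => sup_part_aux μ G hne hmeas hG ε hεm hε S hS
  · intro I hI
    set G' : Set (Ω → ℝ) := (fun f : Ω → ℝ => -f) '' G with hG'def
    have hne' : G'.Nonempty := hne.image _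
    have hmeas' : ∀ g ∈ G', Measurable g := by
      rintro _ ⟨f, hf, rfl⟩
      exact (hmeas f hf).neg
    have hstab' : ∀ A : ℕ → Set Ω, IsMeasPartition A → ∀ gs : ℕ → (Ω → ℝ), (∀ n, gs n ∈ G') →
        ∃ g ∈ G', ∀ n, ∀ᵐ ω ∂μ, ω ∈ A n → g ω = gs n ω := by
      intro A hA gs hgs
      have hmemG : ∀ n, -(gs n) ∈ G := by
        intro n
        obtain ⟨f, hf, hfe⟩ := hgs n
        rw [← hfe, neg_neg]
        exact hf
      obtain ⟨g, hgG, hg⟩ := hG A hA (fun n => -(gs n)) hmemG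
      refine ⟨-g, ⟨g, hgG, rfl⟩, fun n => ?_⟩
      filter_upwards [hg n] with ω hω hmemA
      have := hω hmemA
      simp only [Pi.neg_apply] at this ⊢
      linarith
    have hLUB : IsAELUB μ G' (fun ω => -(I ω)) := by
      constructor
      · rintro _ ⟨f, hf, rfl⟩
        filter_upwards [hI.1 f hf] with ω hω
        simp only [Pi.neg_apply]
        linarith
      · intro c hc
        have hlb : IsAELB μ G (fun ω => -(c ω)) := by
          intro f hf
          have := hc (-f) ⟨f, hf, rfl⟩
          filter_upwards [this] with ω hω
          simp only [Pi.neg_apply] at hω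
          linarith
        filter_upwards [hI.2 _ hlb] with ω hω
        linarith
    obtain ⟨g', hg'G, hfin⟩ :=
      sup_part_aux μ G' hne' hmeas' hstab' ε hεm hε (fun ω => -(I ω)) hLUB
    obtain ⟨g, hgG, rfl⟩ := hg'G
    refine ⟨g, hgG, ?_⟩
    filter_upwards [hfin] with ω hω
    simp only [Pi.neg_apply] at hω
    linarith
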